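/- For complex numbers z₁, z₂ and real p ≥ 2, with f(z) = |z|^{p-2} z, one has |f(z₁) - f(z₂)| ≤ C(p) (|z₁|^{p-2} + |z₂|^{p-2}) |z₁ - z₂| for some constant C(p) depending only on p. -/

import Mathlib

open Complex

/-- Key algebraic inequality: for `0 ≤ b ≤ a` and `0 ≤ q`,
`b * (a^q - b^q) ≤ (q+1) * a^q * (a - b)`. -/
lemma bern_aux {q a b : ℝ} (hq : 0 ≤ q) (hb : 0 ≤ b) (hab : b ≤ a) :
    b * (a ^ q - b ^ q) ≤ (q + 1) * a ^ q * (a - b) := by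
  have ha : 0 ≤ a := hb.trans hab
  rcases eq_or_lt_of_le ha with h0 | h0
  · have hb0 : b = 0 := le_antisymm (hab.trans h0.symm.le) hb
    simp [← h0, hb0]
  -- Bernoulli: 1 + (q+1)*(b/a - 1) ≤ (b/a)^(q+1)
  have hs : (-1 : ℝ) ≤ b / a - 1 := by
    have : 0 ≤ b / a := div_nonneg hb ha
    linarith
  have hbern := one_add_mul_self_le_rpow_one_add hs (by linarith : (1:ℝ) ≤ q + 1)
  rw [show (1 : ℝ) + (b / a - 1) = b / a by ring] at hbern
  have hdiv : (b / a) ^ (q + 1) = b ^ (q + 1) / a ^ (q + 1) :=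
    Real.div_rpow hb ha (q + 1)
  rw [hdiv] at hbern
  have haq : (0:ℝ) < a ^ (q + 1) := Real.rpow_pos_of_pos h0 _
  have hmul := mul_le_mul_of_nonneg_right hbern haq.le
  rw [div_mul_cancel₀ _ haq.ne'] at hmul
  -- hmul : (1 + (q+1)*(b/a - 1)) * a^(q+1) ≤ b^(q+1)
  have ha1 : a ^ (q + 1) = a ^ q * a := Real.rpow_add_one h0.ne' q
  have hb1 : b ^ (q + 1) = b ^ q * b := by
    rcases eq_or_lt_of_le hb with hb0 | hb0
    · simp [← hb0, Real.zero_rpow (by positivity : q + 1 ≠ 0)]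
    · exact Real.rpow_add_one hb0.ne' q
  have hba : b / a * a = b := div_mul_cancel₀ b h0.ne'
  -- expand
  have key : a ^ (q + 1) - b ^ (q + 1) ≤ (q + 1) * a ^ q * (a - b) := by
    have expand : (1 + (q + 1) * (b / a - 1)) * a ^ (q + 1)
        = a ^ (q + 1) + (q + 1) * (b - a) * a ^ q := by
      rw [ha1]
      field_simp
    rw [expand] at hmul
    nlinarith
  have hbq : b * a ^ q ≤ a ^ (q + 1) := by
    rw [ha1]; nlinarith [Real.rpow_nonneg ha q]
  nlinarith [Real.rpow_nonneg hb q]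

/-- For complex numbers `z₁, z₂` and real `p ≥ 2`, with `f z = |z|^(p-2) z`, one has
`|f z₁ - f z₂| ≤ C(p) (|z₁|^(p-2) + |z₂|^(p-2)) |z₁ - z₂|`. -/
theorem stmt0 (p : ℝ) (hp : 2 ≤ p) :
    ∃ C : ℝ, 0 < C ∧ ∀ z₁ z₂ : ℂ,
      ‖((‖z₁‖ ^ (p - 2) : ℝ) : ℂ) * z₁
          - ((‖z₂‖ ^ (p - 2) : ℝ) : ℂ) * z₂‖
        ≤ C * (‖z₁‖ ^ (p - 2) + ‖z₂‖ ^ (p - 2)) * ‖z₁ - z₂‖ := by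
  set q := p - 2 with hqdef
  have hq : 0 ≤ q := by linarith
  refine ⟨q + 2, by linarith, ?_⟩
  -- main estimate assuming |z₂| ≤ |z₁|
  have main : ∀ z₁ z₂ : ℂ, ‖z₂‖ ≤ ‖z₁‖ →
      ‖((‖z₁‖ ^ q : ℝ) : ℂ) * z₁ - ((‖z₂‖ ^ q : ℝ) : ℂ) * z₂‖
        ≤ (q + 2) * (‖z₁‖ ^ q + ‖z₂‖ ^ q) * ‖z₁ - z₂‖ := by
    intro z₁ z₂ hle
    set a := ‖z₁‖ with hadef
    set b := ‖z₂‖ with hbdef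
    have ha : 0 ≤ a := norm_nonneg _
    have hb : 0 ≤ b := norm_nonneg _
    have hdecomp : ((a ^ q : ℝ) : ℂ) * z₁ - ((b ^ q : ℝ) : ℂ) * z₂
        = ((a ^ q : ℝ) : ℂ) * (z₁ - z₂) + (((a ^ q - b ^ q : ℝ)) : ℂ) * z₂ := by
      push_cast; ring
    rw [hdecomp]
    have step1 := norm_add_le (((a ^ q : ℝ) : ℂ) * (z₁ - z₂))
      ((((a ^ q - b ^ q : ℝ)) : ℂ) * z₂)
    have hqab : b ^ q ≤ a ^ q := Real.rpow_le_rpow hb hle hq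
    have e1 : ‖((a ^ q : ℝ) : ℂ) * (z₁ - z₂)‖ = a ^ q * ‖z₁ - z₂‖ := by
      rw [norm_mul, Complex.norm_real, Real.norm_eq_abs, _root_.abs_of_nonneg (Real.rpow_nonneg ha q)]
    have e2 : ‖(((a ^ q - b ^ q : ℝ)) : ℂ) * z₂‖ = (a ^ q - b ^ q) * b := by
      rw [norm_mul, Complex.norm_real, Real.norm_eq_abs, _root_.abs_of_nonneg (by linarith)]
    rw [e1, e2] at step1
    have habd : a - b ≤ ‖z₁ - z₂‖ := norm_sub_norm_le z₁ z₂
    have hkey : (a ^ q - b ^ q) * b ≤ (q + 1) * a ^ q * ‖z₁ - z₂‖ := by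
      have h1 : b * (a ^ q - b ^ q) ≤ (q + 1) * a ^ q * (a - b) := bern_aux hq hb hle
      have h2 : (q + 1) * a ^ q * (a - b) ≤ (q + 1) * a ^ q * ‖z₁ - z₂‖ := by
        apply mul_le_mul_of_nonneg_left habd (by positivity)
      linarith [h1, h2]
    have hd : 0 ≤ ‖z₁ - z₂‖ := norm_nonneg _
    have hbqn : 0 ≤ b ^ q := Real.rpow_nonneg hb q
    nlinarith [mul_nonneg hbqn hd]
  intro z₁ z₂
  rcases le_total (‖z₂‖) (‖z₁‖) with h | h
  · exact main z₁ z₂ h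
  · have := main z₂ z₁ h
    rw [norm_sub_rev z₂ z₁] at this
    calc ‖((‖z₁‖ ^ q : ℝ) : ℂ) * z₁ - ((‖z₂‖ ^ q : ℝ) : ℂ) * z₂‖
        = ‖((‖z₂‖ ^ q : ℝ) : ℂ) * z₂ - ((‖z₁‖ ^ q : ℝ) : ℂ) * z₁‖ := by
          rw [show ((‖z₁‖ ^ q : ℝ) : ℂ) * z₁ - ((‖z₂‖ ^ q : ℝ) : ℂ) * z₂
              = -(((‖z₂‖ ^ q : ℝ) : ℂ) * z₂ - ((‖z₁‖ ^ q : ℝ) : ℂ) * z₁) by ring,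
            norm_neg]
      _ ≤ (q + 2) * (‖z₂‖ ^ q + ‖z₁‖ ^ q) * ‖z₁ - z₂‖ := this
      _ = (q + 2) * (‖z₁‖ ^ q + ‖z₂‖ ^ q) * ‖z₁ - z₂‖ := by ring
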